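/- Let X be a compact metric space, f : X → X continuous, μ a Borel probability measure on X, s ∈ (0,1), r > 0, n ∈ ℕ. Let E be a finite (n,r)-generating set, i.e. X = ⋃_{x∈E} B_n(x,r). Then ∫_{supp μ} μ(B_n(x,2r))^{s-1} dμ(x) ≤ Σ_{x∈E} μ(B_n(x,r))^s. -/

import Mathlib

open Metric

/-- The Bowen metric of order `n`: `d_n(x,y) = max{d(f^i x, f^i y) : 0 ≤ i < n}`. -/
noncomputable def bowenDist {X : Type*} [PseudoMetricSpace X] (f : X → X) (n : ℕ) (x y : X) : ℝ :=
  (((Finset.range n).sup fun i => nndist (f^[i] x) (f^[i] y) : NNReal) : ℝ)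

/-- The open Bowen ball of size `n` and radius `ε` centered at `x`. -/
def bowenBall {X : Type*} [PseudoMetricSpace X] (f : X → X) (n : ℕ) (x : X) (ε : ℝ) : Set X :=
  {y | bowenDist f n x y < ε}

/-- The piecewise-linear bump function of `d_n(x,·)` at levels `ε, 2ε`: equal to `1` when
`d_n(x,y) ≤ ε`, to `2 − d_n(x,y)/ε` when `ε ≤ d_n(x,y) ≤ 2ε`, and to `0` when
`d_n(x,y) ≥ 2ε`. -/
noncomputable def bowenBump {X : Type*} [PseudoMetricSpace X] (f : X → X) (n : ℕ) (ε : ℝ)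
    (x y : X) : ℝ :=
  max 0 (min 1 (2 - bowenDist f n x y / ε))

open MeasureTheory
open scoped ENNReal

/-- The topological support of a measure on a metric space: points all of whose
metric neighborhoods have positive measure. -/
def measSupport {X : Type*} [MetricSpace X] [MeasurableSpace X] (μ : Measure X) : Set X :=
  {x | ∀ ε > (0 : ℝ), 0 < μ (Metric.ball x ε)}

lemma bowenDist_lt_iff' {X : Type*} [PseudoMetricSpace X] (f : X → X) (n : ℕ) (x y : X)
    {c : ℝ} (hc : 0 < c) :
    bowenDist f n x y < c ↔ ∀ i ∈ Finset.range n, dist (f^[i] x) (f^[i] y) < c := by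
  unfold bowenDist
  rw [← Real.coe_toNNReal c hc.le, NNReal.coe_lt_coe,
    Finset.sup_lt_iff (by simpa using hc : (⊥ : NNReal) < c.toNNReal)]
  refine forall₂_congr fun i _ => ?_
  rw [← NNReal.coe_lt_coe, coe_nndist, Real.coe_toNNReal c hc.le]

lemma bowenBall_subset_double {X : Type*} [PseudoMetricSpace X] (f : X → X) (n : ℕ)
    {x z : X} {r : ℝ} (hr : 0 < r) (hx : x ∈ bowenBall f n z r) :
    bowenBall f n z r ⊆ bowenBall f n x (2 * r) := by
  intro y hy
  simp only [bowenBall, Set.mem_setOf_eq] at hx hy ⊢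
  rw [bowenDist_lt_iff' f n _ _ hr] at hx hy
  rw [bowenDist_lt_iff' f n _ _ (by linarith)]
  intro i hi
  calc dist (f^[i] x) (f^[i] y)
      ≤ dist (f^[i] x) (f^[i] z) + dist (f^[i] z) (f^[i] y) := dist_triangle _ _ _
    _ < r + r := by rw [dist_comm]; exact add_lt_add (hx i hi) (hy i hi)
    _ = 2 * r := by ring

lemma lintegral_biUnion_finset_le' {X : Type*} [MeasurableSpace X] (μ : Measure X)
    {ι : Type*} (E : Finset ι) (B : ι → Set X) (g : X → ℝ≥0∞) :
    ∫⁻ x in ⋃ z ∈ E, B z, g x ∂μ ≤ ∑ z ∈ E, ∫⁻ x in B z, g x ∂μ := by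
  classical
  induction E using Finset.induction with
  | empty => simp
  | insert _ _ hz ih =>
    rename_i a t
    rw [Finset.set_biUnion_insert, Finset.sum_insert hz]
    exact (lintegral_union_le _ _ _).trans (add_le_add le_rfl ih)

theorem stmt14 {X : Type*} [MetricSpace X] [CompactSpace X] [MeasurableSpace X] [BorelSpace X]
    (f : X → X) (hf : Continuous f) (μ : Measure X) [IsProbabilityMeasure μ]
    (s : ℝ) (hs : s ∈ Set.Ioo (0 : ℝ) 1) (r : ℝ) (hr : 0 < r) (n : ℕ)
    (E : Finset X) (hE : ∀ y : X, ∃ x ∈ E, y ∈ bowenBall f n x r) :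
    ∫ x in measSupport μ, ((μ (bowenBall f n x (2 * r))).toReal) ^ (s - 1) ∂μ ≤
      ∑ x ∈ E, ((μ (bowenBall f n x r)).toReal) ^ s := by
  obtain ⟨hs0, hs1⟩ := hs
  have hr2 : (0 : ℝ) < 2 * r := by linarith
  -- openness of Bowen balls
  have hopen : ∀ (z : X) (c : ℝ), 0 < c → IsOpen (bowenBall f n z c) := by
    intro z c hc
    have : bowenBall f n z c = ⋂ i ∈ Finset.range n, {y | dist (f^[i] z) (f^[i] y) < c} := by
      ext y
      simp only [bowenBall, Set.mem_setOf_eq, Set.mem_iInter, bowenDist_lt_iff' f n z y hc]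
    rw [this]
    exact isOpen_biInter_finset fun i _ =>
      isOpen_lt (Continuous.dist continuous_const ((hf.iterate i))) continuous_const
  -- measurability of x ↦ μ (bowenBall f n x (2r))
  have hD : MeasurableSet {p : X × X | bowenDist f n p.1 p.2 < 2 * r} := by
    have : {p : X × X | bowenDist f n p.1 p.2 < 2 * r}
        = ⋂ i ∈ Finset.range n, {p : X × X | dist (f^[i] p.1) (f^[i] p.2) < 2 * r} := by
      ext p
      simp only [Set.mem_setOf_eq, Set.mem_iInter, bowenDist_lt_iff' f n p.1 p.2 hr2]
    rw [this]
    refine (isOpen_biInter_finset fun i _ => ?_).measurableSet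
    exact isOpen_lt (Continuous.dist ((hf.iterate i).comp continuous_fst)
      ((hf.iterate i).comp continuous_snd)) continuous_const
  have hmeas : Measurable fun x => μ (bowenBall f n x (2 * r)) := by
    have h := measurable_measure_prodMk_left (ν := μ) hD
    exact h
  have hgm : Measurable fun x => ((μ (bowenBall f n x (2 * r))).toReal) ^ (s - 1) :=
    hmeas.ennreal_toReal.pow_const (s-1)
  have hgnn : ∀ x, 0 ≤ ((μ (bowenBall f n x (2 * r))).toReal) ^ (s - 1) := fun x =>
    Real.rpow_nonneg ENNReal.toReal_nonneg _
  rw [integral_eq_lintegral_of_nonneg_ae (Filter.Eventually.of_forall hgnn)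
    hgm.aestronglyMeasurable]
  set g : X → ℝ≥0∞ :=
    fun x => ENNReal.ofReal (((μ (bowenBall f n x (2 * r))).toReal) ^ (s - 1)) with hg
  have key : ∫⁻ x in measSupport μ, g x ∂μ
      ≤ ∑ z ∈ E, ENNReal.ofReal (((μ (bowenBall f n z r)).toReal) ^ s) := by
    have hcover : measSupport μ ⊆ ⋃ z ∈ E, bowenBall f n z r := by
      intro x _
      obtain ⟨z, hz, hxz⟩ := hE x
      exact Set.mem_biUnion hz hxz
    refine le_trans (lintegral_mono_set hcover) ?_
    refine le_trans (lintegral_biUnion_finset_le' μ E _ g) (Finset.sum_le_sum ?_)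
    intro z _
    by_cases h0 : μ (bowenBall f n z r) = 0
    · rw [setLIntegral_measure_zero _ _ h0]
      exact zero_le
    · set t : ℝ := (μ (bowenBall f n z r)).toReal with ht
      have htpos : 0 < t := ENNReal.toReal_pos h0 (measure_ne_top μ _)
      have hbound : ∀ x ∈ bowenBall f n z r, g x ≤ ENNReal.ofReal (t ^ (s - 1)) := by
        intro x hx
        have hsub := bowenBall_subset_double f n hr hx
        have hle : t ≤ (μ (bowenBall f n x (2 * r))).toReal :=
          ENNReal.toReal_mono (measure_ne_top μ _) (measure_mono hsub)
        exact ENNReal.ofReal_le_ofReal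
          (Real.rpow_le_rpow_of_nonpos htpos hle (by linarith))
      calc ∫⁻ x in bowenBall f n z r, g x ∂μ
          ≤ ∫⁻ _x in bowenBall f n z r, ENNReal.ofReal (t ^ (s - 1)) ∂μ :=
            setLIntegral_mono' (hopen z r hr).measurableSet hbound
        _ = ENNReal.ofReal (t ^ (s - 1)) * μ (bowenBall f n z r) := setLIntegral_const _ _
        _ = ENNReal.ofReal (t ^ (s - 1)) * ENNReal.ofReal t := by
            rw [ht, ENNReal.ofReal_toReal (measure_ne_top μ _)]
        _ = ENNReal.ofReal (t ^ (s - 1) * t) :=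
            (ENNReal.ofReal_mul (Real.rpow_nonneg ENNReal.toReal_nonneg _)).symm
        _ = ENNReal.ofReal (t ^ s) := by
            rw [← Real.rpow_add_one htpos.ne' (s - 1), sub_add_cancel]
  have hfin : (∑ z ∈ E, ENNReal.ofReal (((μ (bowenBall f n z r)).toReal) ^ s)) ≠ ⊤ := by
    refine (ENNReal.sum_lt_top.mpr fun z _ => ENNReal.ofReal_lt_top).ne
  calc (∫⁻ x in measSupport μ, g x ∂μ).toReal
      ≤ (∑ z ∈ E, ENNReal.ofReal (((μ (bowenBall f n z r)).toReal) ^ s)).toReal :=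
        ENNReal.toReal_mono hfin key
    _ = ∑ z ∈ E, ((μ (bowenBall f n z r)).toReal) ^ s := by
        rw [ENNReal.toReal_sum fun z _ => ENNReal.ofReal_ne_top]
        exact Finset.sum_congr rfl fun z _ =>
          ENNReal.toReal_ofReal (Real.rpow_nonneg ENNReal.toReal_nonneg _)
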